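/- Let A = (Q, Σ, S, Δ, F) be a nondeterministic finite automaton with finite state set Q that is trimmed with respect to the Büchi condition, i.e., for every state q ∈ Q there exists a nonempty finite word u such that some accepting state in F is reachable from q by a run on u. Then the ω-language L_ω(A) (under Büchi acceptance) is finite if and only if the finite-word language L_*(A) is slender. -/

import Mathlib

/-- A language is slender if there is a uniform bound `k` on the number of its words
of any given length. -/
def Slender {σ : Type*} (L : Set (List σ)) : Prop :=
  ∃ k : ℕ, ∀ ℓ : ℕ, {w ∈ L | w.length = ℓ}.Finite ∧ {w ∈ L | w.length = ℓ}.ncard ≤ k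

/-- Büchi acceptance of an ω-word by an NFA: there is a run starting in an initial
state, following the transition function, and visiting accepting states infinitely
often. -/
def BuchiAccepts {α Q : Type*} (M : NFA α Q) (w : ℕ → α) : Prop :=
  ∃ r : ℕ → Q, r 0 ∈ M.start ∧ (∀ n, r (n + 1) ∈ M.step (r n) (w n)) ∧
    ∀ n, ∃ m, n ≤ m ∧ r m ∈ M.accept

/-- An automaton is trimmed w.r.t. the Büchi condition if from every state some
accepting state is reachable by a nonempty word. -/
def TrimmedBuchi {α Q : Type*} (M : NFA α Q) : Prop :=
  ∀ q : Q, ∃ u : List α, u ≠ [] ∧ ∃ f ∈ M.accept, f ∈ M.evalFrom {q} u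

namespace BuchiAux

variable {α : Type*} {Q : Type*} (M : NFA α Q)

lemma getElem_congr' {β : Type*} {l l' : List β} (h : l = l') (i : ℕ) (h1 : i < l.length) :
    l[i]'h1 = l'[i]'(h ▸ h1) := by subst h; rfl

lemma evalFrom_append' (S : Set Q) (u v : List α) :
    M.evalFrom S (u ++ v) = M.evalFrom (M.evalFrom S u) v :=
  List.foldl_append

lemma evalFrom_mono {S T : Set Q} (h : S ⊆ T) (u : List α) :
    M.evalFrom S u ⊆ M.evalFrom T u := by
  induction u generalizing S T with
  | nil => simpa using h
  | cons a t ih =>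
    have hs : M.stepSet S a ⊆ M.stepSet T a := by
      intro x hx
      rcases M.mem_stepSet.1 hx with ⟨q, hq, hx⟩
      exact M.mem_stepSet.2 ⟨q, h hq, hx⟩
    exact ih hs

/-- Extract a run from membership in `evalFrom`. -/
lemma exists_run_of_mem_evalFrom {S : Set Q} {u : List α} {f : Q}
    (h : f ∈ M.evalFrom S u) :
    ∃ r : ℕ → Q, r 0 ∈ S ∧ r u.length = f ∧
      ∀ i (hi : i < u.length), r (i + 1) ∈ M.step (r i) (u[i]'hi) := by
  induction u generalizing S with
  | nil =>
    exact ⟨fun _ => f, h, rfl, fun i hi => absurd hi (Nat.not_lt_zero i)⟩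
  | cons a t ih =>
    have h' : f ∈ M.evalFrom (M.stepSet S a) t := h
    obtain ⟨r, hr0, hrl, hrs⟩ := ih h'
    rcases M.mem_stepSet.1 hr0 with ⟨q, hqS, hq⟩
    refine ⟨fun i => Nat.rec q (fun i _ => r i) i, hqS, hrl, ?_⟩
    intro i hi
    cases i with
    | zero => simpa using hq
    | succ i =>
      have hi' : i < t.length := by simpa using hi
      simpa using hrs i hi'

/-- Build membership in `evalFrom` from a run. -/
lemma mem_evalFrom_of_run {S : Set Q} (r : ℕ → Q) (u : List α) (h0 : r 0 ∈ S)
    (hstep : ∀ i (hi : i < u.length), r (i + 1) ∈ M.step (r i) (u[i]'hi)) :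
    r u.length ∈ M.evalFrom S u := by
  induction u generalizing S r with
  | nil => simpa using h0
  | cons a t ih =>
    have h1 : r 1 ∈ M.stepSet S a :=
      M.mem_stepSet.2 ⟨r 0, h0, hstep 0 (by simp)⟩
    have := ih (fun i => r (i + 1)) h1 (fun i hi => by
      have := hstep (i + 1) (by simpa using Nat.succ_lt_succ hi)
      simpa using this)
    simpa using this

/-- From a trimmed automaton, from any accepting state we can reach an accepting
state `g` that lies on a nonempty loop. -/
lemma exists_accept_loop [Fintype Q] (htrim : TrimmedBuchi M) (f : Q) (hf : f ∈ M.accept) :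
    ∃ (x v : List α) (g : Q), v ≠ [] ∧ g ∈ M.accept ∧
      g ∈ M.evalFrom {f} x ∧ g ∈ M.evalFrom {g} v := by
  classical
  choose U hUne Fq hFq hreach using htrim
  set q : ℕ → Q := fun t => Fq^[t] f with hq
  have hqacc : ∀ t, q t ∈ M.accept := by
    intro t
    cases t with
    | zero => exact hf
    | succ t =>
      have : q (t+1) = Fq (q t) := by
        simp [hq, Function.iterate_succ_apply']
      rw [this]; exact hFq _
  have key : ∀ (q0 : Q) (t : ℕ), ∃ w : List α, (t ≠ 0 → w ≠ []) ∧
      Fq^[t] q0 ∈ M.evalFrom {q0} w := by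
    intro q0 t
    induction t with
    | zero => exact ⟨[], fun h => absurd rfl h, by simp⟩
    | succ t ih =>
      obtain ⟨w, hw, hmem⟩ := ih
      refine ⟨w ++ U (Fq^[t] q0), fun _ h => hUne _ (List.append_eq_nil_iff.mp h).2, ?_⟩
      rw [evalFrom_append' M]
      have h1 : Fq (Fq^[t] q0) ∈ M.evalFrom {Fq^[t] q0} (U (Fq^[t] q0)) := hreach _
      have h2 : M.evalFrom {Fq^[t] q0} (U (Fq^[t] q0)) ⊆
          M.evalFrom (M.evalFrom {q0} w) (U (Fq^[t] q0)) :=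
        evalFrom_mono M (by simpa using hmem) _
      rw [Function.iterate_succ_apply']
      exact h2 h1
  obtain ⟨i, j, hij, heq⟩ : ∃ i j : Fin (Fintype.card Q + 1), i ≠ j ∧ q i = q j := by
    have : Fintype.card Q < Fintype.card (Fin (Fintype.card Q + 1)) := by simp
    obtain ⟨i, j, hne, h⟩ := Fintype.exists_ne_map_eq_of_card_lt (fun i : Fin _ => q i) this
    exact ⟨i, j, hne, h⟩
  wlog hlt : (i : ℕ) < (j : ℕ) generalizing i j
  · exact this j i hij.symm heq.symm
      (lt_of_le_of_ne (Nat.le_of_not_lt hlt) (fun h => hij (Fin.ext h.symm)))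
  obtain ⟨x, _, hx⟩ := key f i
  obtain ⟨v, hvne, hv⟩ := key (q i) (j - i)
  have hiter : Fq^[(j : ℕ) - i] (q i) = q j := by
    simp only [hq]
    rw [← Function.iterate_add_apply]
    congr 1; omega
  refine ⟨x, v, q i, hvne (by omega), hqacc i, hx, ?_⟩
  rw [hiter, ← heq] at hv
  exact hv

/-- Any accepted finite word extends to a Büchi-accepted ω-word. -/
lemma buchi_of_accepts [Fintype Q] (htrim : TrimmedBuchi M)
    {u : List α} (hu : u ∈ M.accepts) :
    ∃ W : ℕ → α, (∀ i (h : i < u.length), W i = u[i]'h) ∧ BuchiAccepts M W := by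
  classical
  obtain ⟨f, hf, hfe⟩ := hu
  obtain ⟨r, hr0, hrl, hrstep⟩ := exists_run_of_mem_evalFrom M hfe
  obtain ⟨x, v, g, hvne, hg, hgx, hgv⟩ := exists_accept_loop M htrim f hf
  obtain ⟨ρ₁, hρ10, hρ1X, hρ1step⟩ := exists_run_of_mem_evalFrom M hgx
  obtain ⟨ρ₂, hρ20, hρ2L, hρ2step⟩ := exists_run_of_mem_evalFrom M hgv
  have hρ10' : ρ₁ 0 = f := hρ10
  have hρ20' : ρ₂ 0 = g := hρ20
  set ℓ := u.length with hℓ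
  set X := x.length with hX
  set L := v.length with hLd
  have hL : 0 < L := List.length_pos_iff.mpr hvne
  set c := ℓ + X with hc
  set W : ℕ → α := fun i =>
    if h : i < ℓ then u[i]'h
    else if h2 : i - ℓ < X then x[i - ℓ]'h2
    else v[(i - c) % L]'(Nat.mod_lt _ hL) with hW
  set R : ℕ → Q := fun i =>
    if i < ℓ then r i
    else if i - ℓ < X then ρ₁ (i - ℓ)
    else ρ₂ ((i - c) % L) with hR
  have h1 : ∀ i, i ≤ ℓ → R i = r i := by
    intro i hi
    rcases lt_or_eq_of_le hi with h | h
    · simp [hR, h]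
    · subst h
      simp only [hR, lt_irrefl, if_false, Nat.sub_self]
      by_cases hx0 : 0 < X
      · simp [hx0, hρ10', hrl]
      · have hX0 : X = 0 := by omega
        simp only [hX0, lt_irrefl, if_false]
        have : (ℓ - c) % L = 0 := by
          have : ℓ - c = 0 := by omega
          simp [this]
        rw [this, hρ20', hrl, ← hρ1X, hX0, hρ10']
  have h2 : ∀ j, j ≤ X → R (ℓ + j) = ρ₁ j := by
    intro j hj
    have hnlt : ¬ (ℓ + j < ℓ) := by omega
    have hsub : ℓ + j - ℓ = j := by omega
    rcases lt_or_eq_of_le hj with h | h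
    · simp [hR, hnlt, hsub, h]
    · subst h
      simp only [hR, hnlt, if_false, hsub, lt_irrefl, if_false]
      have : (ℓ + X - c) % L = 0 := by
        have : ℓ + X - c = 0 := by omega
        simp [this]
      rw [this, hρ20', hρ1X]
  have h3 : ∀ j, R (c + j) = ρ₂ (j % L) := by
    intro j
    have hnlt : ¬ (c + j < ℓ) := by omega
    have hnlt2 : ¬ (c + j - ℓ < X) := by omega
    have hsub : c + j - c = j := by omega
    simp [hR, hnlt, hnlt2, hsub]
  refine ⟨W, fun i h => by simp [hW, show i < ℓ from h], R, ?_, ?_, ?_⟩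
  · rw [h1 0 (Nat.zero_le _)]; exact hr0
  · intro n
    rcases Nat.lt_or_ge n ℓ with hn | hn
    · have hWn : W n = u[n]'hn := by simp [hW, hn]
      rw [hWn, h1 n (le_of_lt hn), h1 (n+1) hn]
      exact hrstep n hn
    · rcases Nat.lt_or_ge (n - ℓ) X with hn2 | hn2
      · set j := n - ℓ with hj
        have hnj : n = ℓ + j := by omega
        have hWn : W n = x[j]'hn2 := by
          simp only [hW]
          rw [dif_neg (by omega), dif_pos hn2]
        have hRn : R n = ρ₁ j := by rw [hnj, h2 j (le_of_lt hn2)]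
        have hRn1 : R (n + 1) = ρ₁ (j + 1) := by
          have h' : n + 1 = ℓ + (j + 1) := by omega
          rw [h', h2 (j+1) hn2]
        rw [hWn, hRn, hRn1]
        exact hρ1step j hn2
      · set j := n - c with hj
        have hnj : n = c + j := by omega
        set t := j % L with ht
        have htlt : t < L := Nat.mod_lt _ hL
        have hWn : W n = v[t]'htlt := by
          simp only [hW]
          rw [dif_neg (by omega), dif_neg (by omega)]
        have hRn : R n = ρ₂ t := by rw [hnj, h3 j]
        have hRn1 : R (n + 1) = ρ₂ ((j + 1) % L) := by
          have : n + 1 = c + (j + 1) := by omega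
          rw [this, h3 (j+1)]
        have hmod : (j + 1) % L = (t + 1) % L :=
          (((Nat.mod_modEq j L).add_right 1)).symm
        rw [hWn, hRn, hRn1, hmod]
        rcases Nat.lt_or_ge (t + 1) L with hlt | hge
        · rw [Nat.mod_eq_of_lt hlt]
          exact hρ2step t htlt
        · have hLeq : t + 1 = L := by omega
          have : (t + 1) % L = 0 := by rw [hLeq]; exact Nat.mod_self L
          rw [this, hρ20', ← hρ2L, ← hLeq]
          exact hρ2step t htlt
  · intro n
    refine ⟨c + n * L, by nlinarith, ?_⟩
    rw [h3 (n * L), Nat.mul_mod_left]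
    rw [hρ20']
    exact hg

end BuchiAux

open BuchiAux in
/-- for an automaton trimmed w.r.t. the Büchi condition, the ω-language
`L_ω(A)` is finite iff the finite-word language `L_*(A)` is slender. -/
theorem buchi_lang_finite_iff_slender
    {α Q : Type*} [Fintype α] [Fintype Q] (M : NFA α Q)
    (htrim : TrimmedBuchi M) :
    {w : ℕ → α | BuchiAccepts M w}.Finite ↔
      Slender {w : List α | w ∈ M.accepts} := by
  classical
  rcases isEmpty_or_nonempty Q with hQ | hQ
  · -- trivial case: no states at all
    have hω : {w : ℕ → α | BuchiAccepts M w} = ∅ := by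
      ext w
      simp only [Set.mem_setOf_eq, Set.mem_empty_iff_false, iff_false]
      rintro ⟨r, -, -, -⟩
      exact hQ.false (r 0)
    have hacc : {w : List α | w ∈ M.accepts} = ∅ := by
      ext w
      simp only [Set.mem_setOf_eq, Set.mem_empty_iff_false, iff_false]
      rintro ⟨f, -, -⟩
      exact hQ.false f
    rw [hω, hacc]
    constructor
    · intro _
      exact ⟨0, fun ℓ => by simp⟩
    · intro _
      exact Set.finite_empty
  -- main case
  constructor
  · -- finite ⇒ slender
    intro hfin
    refine ⟨{w : ℕ → α | BuchiAccepts M w}.ncard, fun ℓ => ?_⟩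
    have hfinl : {w ∈ {w : List α | w ∈ M.accepts} | w.length = ℓ}.Finite :=
      (List.finite_length_eq α ℓ).subset (fun w hw => hw.2)
    refine ⟨hfinl, ?_⟩
    -- an injection from length-ℓ accepted words into the ω-language
    have hNα : Nonempty α := by
      obtain ⟨q⟩ := hQ
      obtain ⟨u, hune, -⟩ := htrim q
      cases u with
      | nil => exact absurd rfl hune
      | cons a _ => exact ⟨a⟩
    set E : List α → (ℕ → α) := fun w =>
      if h : w ∈ M.accepts then Classical.choose (buchi_of_accepts M htrim h)
      else fun _ => Classical.arbitrary α with hE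
    have hEpre : ∀ w (h : w ∈ M.accepts) i (hi : i < w.length), E w i = w[i]'hi := by
      intro w h i hi
      simp only [hE, dif_pos h]
      exact (Classical.choose_spec (buchi_of_accepts M htrim h)).1 i hi
    have hEmem : ∀ w (h : w ∈ M.accepts), BuchiAccepts M (E w) := by
      intro w h
      simp only [hE, dif_pos h]
      exact (Classical.choose_spec (buchi_of_accepts M htrim h)).2
    set S := {w ∈ {w : List α | w ∈ M.accepts} | w.length = ℓ} with hS
    have hinj : Set.InjOn E S := by
      intro w hw w' hw' hEeq
      apply List.ext_getElem (by rw [hw.2, hw'.2])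
      intro i hi hi'
      rw [← hEpre w hw.1 i hi, ← hEpre w' hw'.1 i hi', hEeq]
    have himg : E '' S ⊆ {w : ℕ → α | BuchiAccepts M w} := by
      rintro _ ⟨w, hw, rfl⟩
      exact hEmem w hw.1
    calc S.ncard = (E '' S).ncard := (Set.ncard_image_of_injOn hinj).symm
      _ ≤ {w : ℕ → α | BuchiAccepts M w}.ncard := Set.ncard_le_ncard himg hfin
  · -- slender ⇒ finite
    rintro ⟨k, hk⟩
    rw [← Set.not_infinite]
    intro hinf
    choose U hUne Fq hFq hreach using htrim
    set D := Finset.univ.sup (fun q : Q => (U q).length) with hD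
    have hUpos : ∀ q : Q, 1 ≤ (U q).length := fun q => List.length_pos_iff.mpr (hUne q)
    have hUD : ∀ q : Q, (U q).length ≤ D := fun q => by
      rw [hD]; exact Finset.le_sup (f := fun q : Q => (U q).length) (Finset.mem_univ q)
    have hD1 : 1 ≤ D := le_trans (hUpos (Classical.arbitrary Q)) (hUD _)
    obtain ⟨T, hTsub, hTfin, hTcard⟩ := hinf.exists_subset_ncard_eq (k * D + 1)
    set F := hTfin.toFinset with hF
    have hFmem : ∀ w, w ∈ F ↔ w ∈ T := fun w => hTfin.mem_toFinset
    have hFcard : F.card = k * D + 1 := by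
      rw [← hTcard, Set.ncard_eq_toFinset_card T hTfin]
    -- chosen runs
    set rf : (ℕ → α) → (ℕ → Q) := fun w =>
      if h : BuchiAccepts M w then Classical.choose h
      else fun _ => Classical.arbitrary Q with hrf
    have hrfspec : ∀ w (h : BuchiAccepts M w), rf w 0 ∈ M.start ∧
        (∀ n, rf w (n + 1) ∈ M.step (rf w n) (w n)) := by
      intro w h
      simp only [hrf, dif_pos h]
      exact ⟨(Classical.choose_spec h).1, (Classical.choose_spec h).2.1⟩
    -- a separation index
    set idx : (ℕ → α) → (ℕ → α) → ℕ := fun w w' =>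
      if h : ∃ i, w i ≠ w' i then Classical.choose h else 0 with hidx
    set m := (F.sup fun w => F.sup fun w' => idx w w') + 1 with hm
    have hsep : ∀ w ∈ F, ∀ w' ∈ F, w ≠ w' → ∃ i < m, w i ≠ w' i := by
      intro w hw w' hw' hne
      have h : ∃ i, w i ≠ w' i := by
        by_contra hcon
        push_neg at hcon
        exact hne (funext hcon)
      refine ⟨idx w w', ?_, by simp only [hidx, dif_pos h]; exact Classical.choose_spec h⟩
      have h1 : idx w w' ≤ F.sup fun w' => idx w w' := Finset.le_sup hw'
      have h2 : (F.sup fun w' => idx w w') ≤ F.sup fun w => F.sup fun w' => idx w w' :=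
        Finset.le_sup (f := fun w => F.sup fun w' => idx w w') hw
      omega
    -- the map to finite accepted words
    set P : (ℕ → α) → List α := fun w =>
      (List.ofFn fun i : Fin m => w i) ++ U (rf w m) with hP
    have hPacc : ∀ w ∈ F, P w ∈ M.accepts := by
      intro w hw
      have hwB : BuchiAccepts M w := hTsub ((hFmem w).1 hw)
      obtain ⟨h0, hstep⟩ := hrfspec w hwB
      have hrun : rf w m ∈ M.evalFrom M.start (List.ofFn fun i : Fin m => w i) := by
        have := mem_evalFrom_of_run M (rf w) (List.ofFn fun i : Fin m => w i) h0 ?_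
        · rwa [List.length_ofFn] at this
        · intro i hi
          have : (List.ofFn fun i : Fin m => w i)[i]'hi = w i := by
            rw [List.getElem_ofFn]
          rw [this]
          exact hstep i
      refine ⟨Fq (rf w m), hFq _, ?_⟩
      show Fq (rf w m) ∈ M.evalFrom M.start (P w)
      rw [hP]
      rw [evalFrom_append' M]
      exact evalFrom_mono M (Set.singleton_subset_iff.mpr hrun) _ (hreach (rf w m))
    have hPlen : ∀ w, (P w).length ∈ Finset.Icc (m + 1) (m + D) := by
      intro w
      simp only [hP, List.length_append, List.length_ofFn, Finset.mem_Icc]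
      have := hUpos (rf w m)
      have := hUD (rf w m)
      omega
    have hPinj : Set.InjOn P ↑F := by
      intro w hw w' hw' hPeq
      by_contra hne
      obtain ⟨i, him, hneq⟩ := hsep w (by simpa using hw) w' (by simpa using hw') hne
      have hilen : i < (P w).length := by
        simp only [hP, List.length_append, List.length_ofFn]
        omega
      have hi1 : i < (List.ofFn fun i : Fin m => w i).length := by
        rw [List.length_ofFn]; exact him
      have hi2 : i < (List.ofFn fun i : Fin m => w' i).length := by
        rw [List.length_ofFn]; exact him
      have h1 : (P w)[i]'hilen = w i := by
        simp only [hP]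
        rw [List.getElem_append_left hi1, List.getElem_ofFn]
      have h2 : (P w')[i]'(hPeq ▸ hilen) = w' i := by
        simp only [hP]
        rw [List.getElem_append_left hi2, List.getElem_ofFn]
      exact hneq (h1 ▸ h2 ▸ getElem_congr' hPeq i hilen)
    -- pigeonhole
    set Simg := F.image P with hSimg
    have hScard : Simg.card = k * D + 1 := by
      rw [hSimg, Finset.card_image_of_injOn hPinj, hFcard]
    have hmaps : ∀ x ∈ Simg, x.length ∈ Finset.Icc (m + 1) (m + D) := by
      intro x hx
      obtain ⟨w, -, rfl⟩ := Finset.mem_image.mp hx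
      exact hPlen w
    have hcount : (Finset.Icc (m + 1) (m + D)).card * k < Simg.card := by
      rw [Nat.card_Icc, hScard]
      have : m + D + 1 - (m + 1) = D := by omega
      rw [this]
      calc D * k = k * D := Nat.mul_comm D k
        _ < k * D + 1 := Nat.lt_succ_self _
    obtain ⟨ℓ, -, hℓ⟩ :=
      Finset.exists_lt_card_fiber_of_mul_lt_card_of_maps_to hmaps hcount
    -- contradiction with slenderness
    set fib := Simg.filter (fun x => x.length = ℓ) with hfib
    have hsubset : ↑fib ⊆ {w ∈ {w : List α | w ∈ M.accepts} | w.length = ℓ} := by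
      intro x hx
      simp only [hfib, Finset.coe_filter, Set.mem_setOf_eq] at hx
      obtain ⟨hxS, hxlen⟩ := hx
      obtain ⟨w, hw, rfl⟩ := Finset.mem_image.mp hxS
      exact ⟨hPacc w hw, hxlen⟩
    have hle : fib.card ≤ k := by
      have h1 : (↑fib : Set (List α)).ncard ≤
          {w ∈ {w : List α | w ∈ M.accepts} | w.length = ℓ}.ncard :=
        Set.ncard_le_ncard hsubset (hk ℓ).1
      rw [Set.ncard_coe_finset] at h1
      exact le_trans h1 (hk ℓ).2
    omega
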